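/- Let O be a valuation subring of a field K and A an ideal of O. Let x ∈ K be nonzero with x⁻¹ ∉ A. Then for every nonzero a ∈ A one has x ≠ a⁻¹ and (x − a⁻¹)⁻¹ ∈ A. -/

import Mathlib

theorem sub_inv_inv_mem_ideal
    {K : Type*} [Field K] (O : ValuationSubring K) (A : Ideal O)
    (x : K) (hx : x ≠ 0) (hxA : x⁻¹ ∉ (Subtype.val '' ((A : Ideal O) : Set O) : Set K)) :
    ∀ a : O, a ∈ A → (a : K) ≠ 0 →
      x ≠ ((a : K))⁻¹ ∧ (x - ((a : K))⁻¹)⁻¹ ∈ (Subtype.val '' ((A : Ideal O) : Set O) : Set K) := by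
  intro a haA ha0
  have hne : x ≠ ((a : K))⁻¹ := by
    rintro rfl
    exact hxA ⟨a, haA, by rw [inv_inv]⟩
  refine ⟨hne, ?_⟩
  have hax1 : (a : K) * x - 1 ≠ 0 := by
    intro h
    exact hne (eq_inv_of_mul_eq_one_right (by linear_combination h))
  have key : ((a : K) * x - 1)⁻¹ ∈ O := by
    by_contra hnot
    -- then a*x - 1 ∈ O and is a nonunit, so a*x is a unit in O
    have hmem : ((a : K) * x - 1) ∈ O := by
      rcases ValuationSubring.mem_or_inv_mem O ((a : K) * x - 1) with h | h
      · exact h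
      · exact absurd h hnot
    have haxmem : (a : K) * x ∈ O := by
      have := O.add_mem _ _ hmem O.one_mem
      simpa using this
    set u : O := ⟨(a : K) * x, haxmem⟩
    have hnu : (1 : O) - u ∈ nonunits O := by
      intro hu
      apply hnot
      have hu' : IsUnit (⟨(a : K) * x - 1, hmem⟩ : O) := by
        have : (⟨(a : K) * x - 1, hmem⟩ : O) = -(1 - u) := by
          ext; simp [u]
        rw [this]
        exact hu.neg
      rcases hu'.exists_right_inv with ⟨v, hv⟩
      have hv' : ((a : K) * x - 1) * (v : K) = 1 := congrArg Subtype.val hv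
      have : ((a : K) * x - 1)⁻¹ = (v : K) :=
        (eq_inv_of_mul_eq_one_right hv').symm
      rw [this]; exact v.2
    have hu : IsUnit u := IsLocalRing.isUnit_of_mem_nonunits_one_sub_self u hnu
    rcases hu.exists_right_inv with ⟨v, hv⟩
    have hv' : ((a : K) * x) * (v : K) = 1 := congrArg Subtype.val hv
    apply hxA
    refine ⟨a * v, A.mul_mem_right v haA, ?_⟩
    have hcast : ((a * v : O) : K) = (a : K) * (v : K) := by push_cast; ring
    rw [hcast]
    exact eq_inv_of_mul_eq_one_right (by linear_combination hv')
  have hgoal : (x - ((a : K))⁻¹)⁻¹ = (a : K) * ((a : K) * x - 1)⁻¹ := by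
    rw [inv_eq_iff_eq_inv, mul_inv, inv_inv]
    field_simp
  refine ⟨a * ⟨_, key⟩, A.mul_mem_right _ haA, ?_⟩
  push_cast
  rw [hgoal]
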